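/- Fix p > 1 and β ∈ (0,1). The function Ψ(θ) = ((1−β)/2)·log θ + β·log I_p(θ) + (1−β)·log J_p(θ) on (0,∞) attains its supremum, and its unique global maximizer θ* ∈ (0,∞) is characterized by the equation θ*·J_p(θ*)/I_p(θ*) = (1−β)p/(2(p−1)β). -/

import Mathlib

open MeasureTheory Real

open Set Filter Topology

namespace PhaseAux

/-- Integrability on ℝ of `f ∘ abs` from integrability on `Ioi 0`. -/
lemma integrable_comp_abs {f : ℝ → ℝ} (hf : IntegrableOn f (Ioi 0)) :
    Integrable (fun x => f |x|) := by
  have int_Ioi : IntegrableOn (fun x ↦ f |x|) (Ioi 0) := by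
    refine hf.congr_fun (fun x hx => ?_) measurableSet_Ioi
    rw [abs_of_pos hx]
  have int_Iic : IntegrableOn (fun x ↦ f |x|) (Iic 0) := by
    rw [← Measure.map_neg_eq_self (volume : Measure ℝ)]
    have m : MeasurableEmbedding fun x : ℝ => -x := (Homeomorph.neg ℝ).measurableEmbedding
    rw [m.integrableOn_map_iff]
    simp_rw [Function.comp_def, abs_neg, neg_preimage, neg_Iic, neg_zero]
    exact Iff.mpr integrableOn_Ici_iff_integrableOn_Ioi int_Ioi
  rw [← integrableOn_univ, ← Iic_union_Ioi (a := (0:ℝ)), integrableOn_union]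
  exact ⟨int_Iic, int_Ioi⟩
end PhaseAux
namespace PhaseAux
noncomputable def E (p θ x : ℝ) : ℝ := Real.exp (-x ^ p - θ * x ^ (2*p-2))

lemma measurable_aux (p s θ : ℝ) : Measurable (fun x : ℝ => x ^ s * E p θ x) := by
  unfold E
  fun_prop

lemma integrableOn_aux {p s θ : ℝ} (hp : 1 < p) (hs : -1 < s) (hθ : 0 ≤ θ) :
    IntegrableOn (fun x : ℝ => x ^ s * E p θ x) (Ioi 0) := by
  refine Integrable.mono' (integrableOn_rpow_mul_exp_neg_rpow (p := p) hs (by linarith))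
    (measurable_aux p s θ).aestronglyMeasurable ?_
  filter_upwards [ae_restrict_mem measurableSet_Ioi] with x hx
  have hx0 : (0:ℝ) < x := hx
  rw [Real.norm_eq_abs, abs_mul, abs_of_nonneg (rpow_nonneg hx0.le s),
    abs_of_nonneg (le_of_lt (by unfold E; exact exp_pos _))]
  refine mul_le_mul_of_nonneg_left ?_ (rpow_nonneg hx0.le s)
  rw [E]
  apply exp_le_exp.2
  have : 0 ≤ θ * x ^ (2*p-2) := mul_nonneg hθ (rpow_nonneg hx0.le _)
  linarith

end PhaseAux
namespace PhaseAux
lemma E_pos {p θ x : ℝ} : 0 < E p θ x := exp_pos _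

noncomputable def f (p s θ : ℝ) : ℝ := ∫ x : ℝ, |x| ^ s * E p θ |x|

lemma integrable_f {p s θ : ℝ} (hp : 1 < p) (hs : -1 < s) (hθ : 0 ≤ θ) :
    Integrable (fun x : ℝ => |x| ^ s * E p θ |x|) :=
  integrable_comp_abs (integrableOn_aux hp hs hθ)

lemma f_pos {p s θ : ℝ} (hp : 1 < p) (hs : -1 < s) (hθ : 0 ≤ θ) : 0 < f p s θ := by
  rw [f, integral_pos_iff_support_of_nonneg
    (fun x => mul_nonneg (rpow_nonneg (abs_nonneg x) s) E_pos.le) (integrable_f hp hs hθ)]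
  refine lt_of_lt_of_le ?_ (measure_mono (fun x (hx : x ∈ Ioi (0:ℝ)) => ?_))
  · rw [Real.volume_Ioi]; exact ENNReal.zero_lt_top
  · have hx0 : (0:ℝ) < x := hx
    exact Function.mem_support.2 (ne_of_gt (mul_pos (rpow_pos_of_pos (abs_pos.2 hx0.ne') s) E_pos))

/-- strict monotonicity in θ -/
lemma f_strictAnti {p s : ℝ} (hp : 1 < p) (hs : -1 < s) {θ₁ θ₂ : ℝ} (h0 : 0 ≤ θ₁)
    (h12 : θ₁ < θ₂) : f p s θ₂ < f p s θ₁ := by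
  have hi1 := integrable_f (s := s) hp hs h0
  have hi2 := integrable_f (s := s) hp hs (h0.trans h12.le)
  have hsub : Integrable (fun x : ℝ => |x| ^ s * E p θ₁ |x| - |x| ^ s * E p θ₂ |x|) := hi1.sub hi2
  have key : 0 < ∫ x : ℝ, (|x| ^ s * E p θ₁ |x| - |x| ^ s * E p θ₂ |x|) := by
    rw [integral_pos_iff_support_of_nonneg _ hsub]
    · refine lt_of_lt_of_le ?_ (measure_mono (fun x (hx : x ∈ Ioi (0:ℝ)) => ?_))
      · rw [Real.volume_Ioi]; exact ENNReal.zero_lt_top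
      · have hx0 : (0:ℝ) < x := hx
        have : E p θ₂ |x| < E p θ₁ |x| := by
          rw [E, E]
          apply exp_lt_exp.2
          have : 0 < |x| ^ (2*p-2) := rpow_pos_of_pos (abs_pos.2 hx0.ne') _
          nlinarith
        refine Function.mem_support.2 (ne_of_gt ?_)
        have := rpow_pos_of_pos (abs_pos.2 hx0.ne') s
        nlinarith
    · intro x
      have : E p θ₂ |x| ≤ E p θ₁ |x| := by
        rw [E, E]
        apply exp_le_exp.2
        have : 0 ≤ |x| ^ (2*p-2) := rpow_nonneg (abs_nonneg x) _
        nlinarith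
      have h2 := rpow_nonneg (abs_nonneg x) s
      simp only [Pi.zero_apply]
      nlinarith
  rw [integral_sub hi1 hi2] at key
  unfold f
  linarith
end PhaseAux
namespace PhaseAux
lemma hasDerivAt_f {p s : ℝ} (hp : 1 < p) (hs : -1 < s) {θ : ℝ} (hθ : 0 < θ) :
    HasDerivAt (f p s) (-f p (s + (2*p-2)) θ) θ := by
  have hs' : -1 < s + (2*p-2) := by linarith
  have key := hasDerivAt_integral_of_dominated_loc_of_deriv_le (μ := volume)
    (F := fun t x => |x| ^ s * E p t |x|)
    (F' := fun t x => -(|x| ^ (s + (2*p-2)) * E p t |x|))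
    (x₀ := θ) (s := Metric.ball θ (θ/2)) (bound := fun x => |x| ^ (s + (2*p-2)) * E p 0 |x|)
    (Metric.ball_mem_nhds θ (by positivity))
    (Eventually.of_forall fun t =>
      (((measurable_aux p s t).comp measurable_abs).aestronglyMeasurable))
    (integrable_f hp hs hθ.le)
    ((((measurable_aux p (s + (2*p-2)) θ).comp measurable_abs).neg).aestronglyMeasurable)
    ?_ (integrable_f hp hs' le_rfl) ?_
  · refine key.2.congr_deriv ?_
    rw [f, ← integral_neg]
  · filter_upwards [] with x
    intro t ht
    have ht2 : 0 ≤ t := by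
      have := Metric.mem_ball.1 ht
      have := abs_lt.1 (by simpa [Real.dist_eq] using this)
      linarith [this.1]
    rw [norm_neg, Real.norm_eq_abs, abs_of_nonneg
      (mul_nonneg (rpow_nonneg (abs_nonneg x) _) E_pos.le)]
    refine mul_le_mul_of_nonneg_left ?_ (rpow_nonneg (abs_nonneg x) _)
    rw [E, E]
    apply exp_le_exp.2
    have : 0 ≤ t * |x| ^ (2*p-2) := mul_nonneg ht2 (rpow_nonneg (abs_nonneg x) _)
    simp only [zero_mul]
    linarith
  · have hae : ∀ᵐ x : ℝ, x ≠ 0 := by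
      rw [ae_iff]
      simp only [not_not, Set.setOf_eq_eq_singleton]
      exact Real.volume_singleton
    filter_upwards [hae] with x hx
    intro t ht
    have hax : 0 < |x| := abs_pos.2 hx
    have h1 : HasDerivAt (fun t : ℝ => -|x| ^ p - t * |x| ^ (2*p-2))
        (-|x| ^ (2*p-2)) t := by
      simpa using (hasDerivAt_const t (-|x| ^ p)).fun_sub ((hasDerivAt_id t).mul_const (|x| ^ (2*p-2)))
    have h2 := (h1.exp).const_mul (|x| ^ s)
    refine h2.congr_deriv ?_
    rw [E, rpow_add hax]
    ring
end PhaseAux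
namespace PhaseAux
lemma f_eq_two_mul (p s θ : ℝ) :
    f p s θ = 2 * ∫ x in Ioi (0:ℝ), x ^ s * E p θ x := by
  rw [f]
  exact integral_comp_abs (f := fun x => x ^ s * E p θ x)

lemma ibp {p θ : ℝ} (hp : 1 < p) (hθ : 0 < θ) :
    (p-1) * f p (p-2) θ = p * f p (2*p-2) θ + (2*θ*(p-1)) * f p (3*p-4) θ := by
  set G : ℝ → ℝ := fun x => x ^ (p-1) * E p θ x with hG
  set g' : ℝ → ℝ := fun x => (p-1) * (x ^ (p-2) * E p θ x) - p * (x ^ (2*p-2) * E p θ x)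
    - (θ*(2*p-2)) * (x ^ (3*p-4) * E p θ x) with hg'
  have hint1 : IntegrableOn (fun x : ℝ => x ^ (p-2) * E p θ x) (Ioi 0) :=
    integrableOn_aux hp (by linarith) hθ.le
  have hint2 : IntegrableOn (fun x : ℝ => x ^ (2*p-2) * E p θ x) (Ioi 0) :=
    integrableOn_aux hp (by linarith) hθ.le
  have hint3 : IntegrableOn (fun x : ℝ => x ^ (3*p-4) * E p θ x) (Ioi 0) :=
    integrableOn_aux hp (by linarith) hθ.le
  have hg'int : IntegrableOn g' (Ioi 0) :=
    (((hint1.const_mul (p-1)).sub (hint2.const_mul p)).sub (hint3.const_mul (θ*(2*p-2))))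
  have hderiv : ∀ x ∈ Ioi (0:ℝ), HasDerivAt G (g' x) x := by
    intro x hx
    have hx0 : (0:ℝ) < x := hx
    have h1 : HasDerivAt (fun x : ℝ => x ^ (p-1)) ((p-1) * x ^ (p-2)) x := by
      have := Real.hasDerivAt_rpow_const (x := x) (p := p-1) (Or.inl hx0.ne')
      convert this using 2
      ring_nf
    have h2 : HasDerivAt (fun x : ℝ => -x ^ p - θ * x ^ (2*p-2))
        (-(p * x ^ (p-1)) - θ * ((2*p-2) * x ^ (2*p-3))) x := by
      have ha := (Real.hasDerivAt_rpow_const (x := x) (p := p) (Or.inl hx0.ne')).neg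
      have hb := (Real.hasDerivAt_rpow_const (x := x) (p := 2*p-2) (Or.inl hx0.ne')).const_mul θ
      refine (ha.fun_sub hb).congr_deriv ?_
      ring_nf
    have h3 : HasDerivAt (fun x : ℝ => E p θ x)
        ((-(p * x ^ (p-1)) - θ * ((2*p-2) * x ^ (2*p-3))) * E p θ x) x := by
      simpa only [E, mul_comm] using h2.exp
    have h4 := h1.fun_mul h3
    refine h4.congr_deriv ?_
    rw [hg']
    have e1 : x ^ (p-1) * x ^ (p-1) = x ^ (2*p-2) := by
      rw [← rpow_add hx0]; ring_nf
    have e2 : x ^ (p-1) * x ^ (2*p-3) = x ^ (3*p-4) := by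
      rw [← rpow_add hx0]; ring_nf
    simp only
    rw [← e1, ← e2]
    ring
  have hcont : ContinuousWithinAt G (Ici 0) 0 := by
    have c1 : ContinuousAt (fun x : ℝ => x ^ (p-1)) 0 :=
      Real.continuousAt_rpow_const 0 (p-1) (Or.inr (by linarith))
    have c2 : ContinuousAt (fun x : ℝ => E p θ x) 0 := by
      have := (((Real.continuousAt_rpow_const 0 p (Or.inr (by linarith))).neg).sub
        ((Real.continuousAt_rpow_const 0 (2*p-2) (Or.inr (by linarith))).const_mul θ)).rexp
      simpa only [E, mul_comm, Pi.sub_apply, Pi.neg_apply] using this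
    exact (c1.mul c2).continuousWithinAt
  have htail : Tendsto G atTop (𝓝 0) := by
    have hexp : Tendsto (fun x : ℝ => exp (-(1/2) * x)) atTop (𝓝 0) := by
      have h : Tendsto (fun x : ℝ => (1/2 : ℝ) * x) atTop atTop :=
        Tendsto.const_mul_atTop (by norm_num) tendsto_id
      have := tendsto_exp_neg_atTop_nhds_zero.comp h
      simpa [Function.comp_def, neg_mul] using this
    have h0 : Tendsto (fun x : ℝ => x ^ (p-1) * exp (-1 * x ^ p)) atTop (𝓝 0) :=
      ((rpow_mul_exp_neg_mul_rpow_isLittleO_exp_neg (p-1) hp one_pos).isBigO).trans_tendsto hexp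
    refine squeeze_zero' ?_ ?_ h0
    · filter_upwards [eventually_gt_atTop 0] with x hx
      exact mul_nonneg (rpow_nonneg hx.le _) (le_of_lt (exp_pos _))
    · filter_upwards [eventually_gt_atTop 0] with x hx
      rw [hG]
      simp only
      refine mul_le_mul_of_nonneg_left ?_ (rpow_nonneg hx.le _)
      rw [E, neg_one_mul]
      refine exp_le_exp.2 ?_
      have := mul_nonneg hθ.le (rpow_nonneg hx.le (2*p-2))
      linarith
  have hzero : G 0 = 0 := by
    rw [hG]
    simp [Real.zero_rpow (by intro h; exact absurd h (by intro h'; linarith [h'] : ¬ (p-1=0)) : p - 1 ≠ 0)]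
  have key : ∫ x in Ioi (0:ℝ), g' x = 0 - G 0 :=
    integral_Ioi_of_hasDerivAt_of_tendsto hcont hderiv hg'int htail
  rw [hzero, sub_zero, hg'] at key
  have ha : IntegrableOn (fun x : ℝ =>
      (p-1) * (x ^ (p-2) * E p θ x) - p * (x ^ (2*p-2) * E p θ x)) (Ioi 0) :=
    (hint1.const_mul (p-1)).sub (hint2.const_mul p)
  rw [integral_sub ha (hint3.const_mul (θ*(2*p-2))),
    integral_sub (hint1.const_mul (p-1)) (hint2.const_mul p),
    MeasureTheory.integral_const_mul, MeasureTheory.integral_const_mul, MeasureTheory.integral_const_mul] at key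
  rw [f_eq_two_mul, f_eq_two_mul, f_eq_two_mul]
  linear_combination 2 * key
end PhaseAux
namespace PhaseAux
lemma tendsto_f_atTop {p : ℝ} (hp : 1 < p) :
    Tendsto (fun θ => f p 0 θ) atTop (𝓝 0) := by
  have key := tendsto_integral_filter_of_dominated_convergence (μ := volume) (l := atTop)
    (F := fun θ x => |x| ^ (0:ℝ) * E p θ |x|) (f := fun _ : ℝ => (0:ℝ))
    (bound := fun x => |x| ^ (0:ℝ) * E p 0 |x|) ?_ ?_ (integrable_f hp (by norm_num) le_rfl) ?_
  · simpa [f] using key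
  · filter_upwards [eventually_ge_atTop (0:ℝ)] with θ hθ
    exact (((measurable_aux p 0 θ).comp measurable_abs).aestronglyMeasurable)
  · filter_upwards [eventually_ge_atTop (0:ℝ)] with θ hθ
    filter_upwards [] with x
    rw [Real.norm_eq_abs, abs_of_nonneg (mul_nonneg (rpow_nonneg (abs_nonneg x) _) E_pos.le)]
    refine mul_le_mul_of_nonneg_left ?_ (rpow_nonneg (abs_nonneg x) _)
    rw [E, E]
    refine exp_le_exp.2 ?_
    have : 0 ≤ θ * |x| ^ (2*p-2) := mul_nonneg hθ (rpow_nonneg (abs_nonneg x) _)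
    simp only [zero_mul]
    linarith
  · have hae : ∀ᵐ x : ℝ, x ≠ 0 := by
      rw [ae_iff]
      simp only [not_not, Set.setOf_eq_eq_singleton]
      exact Real.volume_singleton
    filter_upwards [hae] with x hx
    have hax : 0 < |x| ^ (2*p-2) := rpow_pos_of_pos (abs_pos.2 hx) _
    have h2 : Tendsto (fun θ : ℝ => θ * |x| ^ (2*p-2)) atTop atTop :=
      Tendsto.atTop_mul_const hax tendsto_id
    have h3 := tendsto_neg_atTop_atBot.comp h2
    have h4 := tendsto_atBot_add_const_left atTop (-|x| ^ p) h3
    have h1 : Tendsto (fun θ : ℝ => -|x| ^ p - θ * |x| ^ (2*p-2)) atTop atBot := by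
      simpa [Function.comp_def, sub_eq_add_neg] using h4
    have := Real.tendsto_exp_atBot.comp h1
    simp only [rpow_zero, one_mul, E]
    simpa [Function.comp_def] using this
end PhaseAux
namespace PhaseAux
lemma hasDerivAt_I {p : ℝ} (hp : 1 < p) {θ : ℝ} (hθ : 0 < θ) :
    HasDerivAt (f p 0) (-f p (2*p-2) θ) θ := by
  have := hasDerivAt_f (s := 0) hp (by norm_num) hθ
  rwa [show (0:ℝ) + (2*p-2) = 2*p-2 by ring] at this

lemma hasDerivAt_J {p : ℝ} (hp : 1 < p) {θ : ℝ} (hθ : 0 < θ) :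
    HasDerivAt (f p (p-2)) (-f p (3*p-4) θ) θ := by
  have := hasDerivAt_f (s := p-2) hp (by linarith) hθ
  rwa [show (p-2) + (2*p-2) = 3*p-4 by ring] at this

lemma phi_hasDerivAt {p : ℝ} (hp : 1 < p) {θ : ℝ} (hθ : 0 < θ) :
    HasDerivAt (fun t => t * f p (p-2) t) (f p (p-2) θ - θ * f p (3*p-4) θ) θ := by
  have := (hasDerivAt_id θ).fun_mul (hasDerivAt_J hp hθ)
  simpa [mul_comm, sub_eq_add_neg] using this

lemma phi_strictMono {p : ℝ} (hp : 1 < p) :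
    StrictMonoOn (fun t => t * f p (p-2) t) (Ioi 0) := by
  apply strictMonoOn_of_deriv_pos (convex_Ioi 0)
  · exact fun x hx => ((phi_hasDerivAt hp hx).continuousAt).continuousWithinAt
  · intro x hx
    rw [interior_Ioi] at hx
    rw [(phi_hasDerivAt hp hx).deriv]
    have hid := ibp hp hx
    have hK := f_pos (s := 2*p-2) hp (by linarith) hx.le
    have hL := f_pos (s := 3*p-4) hp (by linarith) hx.le
    have hx0 : (0:ℝ) < x := hx
    nlinarith [mul_pos hx0 hL]
end PhaseAux

open PhaseAux

theorem phase_function_maximizer (p β : ℝ) (hp : 1 < p) (hβ : β ∈ Set.Ioo (0 : ℝ) 1)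
    (I J Ψ : ℝ → ℝ)
    (hI : ∀ θ : ℝ, I θ = ∫ x : ℝ, Real.exp (-|x| ^ p - θ * |x| ^ (2 * p - 2)))
    (hJ : ∀ θ : ℝ, J θ = ∫ x : ℝ, |x| ^ (p - 2) * Real.exp (-|x| ^ p - θ * |x| ^ (2 * p - 2)))
    (hΨ : ∀ θ : ℝ, Ψ θ =
      (1 - β) / 2 * Real.log θ + β * Real.log (I θ) + (1 - β) * Real.log (J θ)) :
    ∃ θs : ℝ, 0 < θs ∧ (∀ θ ∈ Set.Ioi (0 : ℝ), Ψ θ ≤ Ψ θs) ∧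
      (∀ θ ∈ Set.Ioi (0 : ℝ), (∀ θ' ∈ Set.Ioi (0 : ℝ), Ψ θ' ≤ Ψ θ) → θ = θs) ∧
      (∀ θ ∈ Set.Ioi (0 : ℝ),
        ((∀ θ' ∈ Set.Ioi (0 : ℝ), Ψ θ' ≤ Ψ θ) ↔
          θ * J θ / I θ = (1 - β) * p / (2 * (p - 1) * β))) := by
  obtain ⟨hβ0, hβ1⟩ := hβ
  have hp1 : (0:ℝ) < p - 1 := by linarith
  have hIe : I = f p 0 := by
    funext θ
    rw [hI θ, f]
    congr 1
    funext x
    rw [Real.rpow_zero, one_mul, E]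
  have hJe : J = f p (p-2) := by
    funext θ
    rw [hJ θ, f]
    simp only [E]
  subst hIe hJe
  have hΨe : Ψ = fun θ => (1 - β) / 2 * Real.log θ + β * Real.log (f p 0 θ)
      + (1 - β) * Real.log (f p (p-2) θ) := funext hΨ
  subst hΨe
  set c : ℝ := (1-β)*p/(2*(p-1)) with hc
  have hc0 : 0 < c := by
    rw [hc]
    apply div_pos (mul_pos (by linarith) (by linarith)) (by linarith)
  have hIpos : ∀ θ : ℝ, 0 ≤ θ → 0 < f p 0 θ := fun θ h => f_pos hp (by norm_num) h
  have hJpos : ∀ θ : ℝ, 0 ≤ θ → 0 < f p (p-2) θ := fun θ h => f_pos hp (by linarith) h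
  have hKpos : ∀ θ : ℝ, 0 ≤ θ → 0 < f p (2*p-2) θ := fun θ h => f_pos hp (by linarith) h
  have hLpos : ∀ θ : ℝ, 0 ≤ θ → 0 < f p (3*p-4) θ := fun θ h => f_pos hp (by linarith) h
  set g : ℝ → ℝ := fun θ => β / f p 0 θ - c / (θ * f p (p-2) θ) with hg
  -- strict monotonicity of g on Ioi 0
  have hgmono : StrictMonoOn g (Ioi 0) := by
    intro a ha b hb hab
    have ha0 : (0:ℝ) < a := ha
    have hb0 : (0:ℝ) < b := hb
    have h1 : β / f p 0 a < β / f p 0 b :=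
      div_lt_div_of_pos_left hβ0 (hIpos b hb0.le) (f_strictAnti hp (by norm_num) ha0.le hab)
    have h2 : c / (b * f p (p-2) b) < c / (a * f p (p-2) a) :=
      div_lt_div_of_pos_left hc0 (mul_pos ha0 (hJpos a ha0.le)) (phi_strictMono hp ha hb hab)
    rw [hg]
    simp only
    linarith
  -- continuity of g on Ioi 0
  have hgcont : ContinuousOn g (Ioi 0) := by
    intro θ hθ
    have hθ0 : (0:ℝ) < θ := hθ
    refine ContinuousAt.continuousWithinAt ?_
    rw [hg]
    exact (continuousAt_const.div (hasDerivAt_I hp hθ0).continuousAt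
        (hIpos θ hθ0.le).ne').sub
      (continuousAt_const.div (continuousAt_id.mul (hasDerivAt_J hp hθ0).continuousAt)
        (mul_pos hθ0 (hJpos θ hθ0.le)).ne')
  -- a point where g is negative
  set J0 : ℝ := f p (p-2) 0 with hJ0
  set I1 : ℝ := f p 0 1 with hI1
  have hJ0pos : 0 < J0 := hJpos 0 le_rfl
  have hI1pos : 0 < I1 := hIpos 1 zero_le_one
  set θlo : ℝ := min 1 (c * I1 / (β * J0) / 2) with hθlo
  have hθlopos : 0 < θlo := lt_min one_pos (by positivity)
  have hθlo1 : θlo ≤ 1 := min_le_left _ _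
  have hglo : g θlo < 0 := by
    have hJlo : f p (p-2) θlo < J0 := f_strictAnti hp (by linarith) le_rfl hθlopos
    have hIlo : I1 ≤ f p 0 θlo := by
      rcases eq_or_lt_of_le hθlo1 with h | h
      · rw [h]
      · exact (f_strictAnti hp (by norm_num) hθlopos.le h).le
    have hA : β / f p 0 θlo ≤ β / I1 :=
      div_le_div_of_nonneg_left hβ0.le hI1pos hIlo
    have hB : θlo * f p (p-2) θlo < c * I1 / β := by
      have h1 : θlo ≤ c * I1 / (β * J0) / 2 := min_le_right _ _
      have h2 : θlo * f p (p-2) θlo < θlo * J0 :=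
        (mul_lt_mul_iff_right₀ hθlopos).2 hJlo
      have h3 : θlo * J0 ≤ (c * I1 / (β * J0) / 2) * J0 :=
        mul_le_mul_of_nonneg_right h1 hJ0pos.le
      have h4 : (c * I1 / (β * J0) / 2) * J0 = c * I1 / β / 2 := by
        field_simp
      have h5 : c * I1 / β / 2 < c * I1 / β := by
        have : 0 < c * I1 / β := by positivity
        linarith
      linarith
    have hC : β / I1 < c / (θlo * f p (p-2) θlo) := by
      have := div_lt_div_of_pos_left hc0 (mul_pos hθlopos (hJpos θlo hθlopos.le)) hB
      have heq : c / (c * I1 / β) = β / I1 := by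
        field_simp
      linarith [heq ▸ this]
    rw [hg]
    simp only
    linarith
  -- a point where g is positive
  have hεpos : 0 < β * (1 * f p (p-2) 1) / c :=
    div_pos (mul_pos hβ0 (by rw [one_mul]; exact hJpos 1 zero_le_one)) hc0
  obtain ⟨θhi, hθhi_lt, hθhi1⟩ :
      ∃ θhi : ℝ, f p 0 θhi < β * (1 * f p (p-2) 1) / c ∧ 1 ≤ θhi := by
    have h1 := (tendsto_f_atTop hp).eventually_lt_const hεpos
    exact ((h1.and (eventually_ge_atTop 1)).exists)
  have hθhipos : 0 < θhi := lt_of_lt_of_le one_pos hθhi1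
  have hghi : 0 < g θhi := by
    have hφ1 : (0:ℝ) < 1 * f p (p-2) 1 := by
      rw [one_mul]; exact hJpos 1 zero_le_one
    have hφmono : 1 * f p (p-2) 1 ≤ θhi * f p (p-2) θhi := by
      rcases eq_or_lt_of_le hθhi1 with h | h
      · rw [← h]
      · exact (phi_strictMono hp (mem_Ioi.2 one_pos) (mem_Ioi.2 hθhipos) h).le
    have h1 : c / (θhi * f p (p-2) θhi) ≤ c / (1 * f p (p-2) 1) :=
      div_le_div_of_nonneg_left hc0.le hφ1 hφmono
    have h2 : β / (β * (1 * f p (p-2) 1) / c) < β / f p 0 θhi :=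
      div_lt_div_of_pos_left hβ0 (hIpos θhi hθhipos.le) hθhi_lt
    have heq : β / (β * (1 * f p (p-2) 1) / c) = c / (1 * f p (p-2) 1) := by
      rw [one_mul, div_div_eq_mul_div, mul_div_mul_left _ _ hβ0.ne']
    rw [hg]
    simp only
    rw [heq] at h2
    linarith
  -- root of g by IVT
  have hθloθhi : θlo ≤ θhi := le_trans hθlo1 hθhi1
  have hIcc : Icc θlo θhi ⊆ Ioi 0 := fun x hx => lt_of_lt_of_le hθlopos hx.1
  obtain ⟨θs, hθsIcc, hgθs⟩ : ∃ θs ∈ Icc θlo θhi, g θs = 0 := by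
    have := intermediate_value_Icc hθloθhi (hgcont.mono hIcc)
    have h0 : (0:ℝ) ∈ Icc (g θlo) (g θhi) := ⟨hglo.le, hghi.le⟩
    obtain ⟨θs, hmem, heq⟩ := this h0
    exact ⟨θs, hmem, heq⟩
  have hθs0 : 0 < θs := lt_of_lt_of_le hθlopos hθsIcc.1
  set Φ : ℝ → ℝ := fun θ => (1 - β) / 2 * Real.log θ + β * Real.log (f p 0 θ)
      + (1 - β) * Real.log (f p (p - 2) θ) with hΦ
  -- derivative of Φ
  have hΨd : ∀ θ : ℝ, 0 < θ → HasDerivAt Φ (-(f p (2*p-2) θ) * g θ) θ := by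
    intro θ hθ
    have h1 := (Real.hasDerivAt_log hθ.ne').const_mul ((1-β)/2)
    have h2 := ((hasDerivAt_I hp hθ).log (hIpos θ hθ.le).ne').const_mul β
    have h3 := ((hasDerivAt_J hp hθ).log (hJpos θ hθ.le).ne').const_mul (1-β)
    have h4 := (h1.fun_add h2).fun_add h3
    rw [hΦ]
    refine h4.congr_deriv ?_
    have hiden := ibp hp hθ
    have hL : f p (3*p-4) θ = ((p-1) * f p (p-2) θ - p * f p (2*p-2) θ) / (2*θ*(p-1)) := by
      rw [eq_div_iff (by positivity : (2*θ*(p-1)) ≠ 0)]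
      linarith [hiden]
    rw [hg]
    simp only
    rw [hc, hL]
    have e1 := (hIpos θ hθ.le).ne'
    have e2 := (hJpos θ hθ.le).ne'
    field_simp
    ring
  have hgneg : ∀ θ : ℝ, 0 < θ → θ < θs → g θ < 0 := by
    intro θ h hlt
    have := hgmono (mem_Ioi.2 h) (mem_Ioi.2 hθs0) hlt
    rw [hgθs] at this
    exact this
  have hgpos : ∀ θ : ℝ, θs < θ → 0 < g θ := by
    intro θ hlt
    have := hgmono (mem_Ioi.2 hθs0) (mem_Ioi.2 (hθs0.trans hlt)) hlt
    rw [hgθs] at this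
    exact this
  have mono1 : StrictMonoOn Φ (Ioc 0 θs) := by
    apply strictMonoOn_of_deriv_pos (convex_Ioc 0 θs)
    · exact fun x hx => (hΨd x hx.1).continuousAt.continuousWithinAt
    · intro x hx
      rw [interior_Ioc] at hx
      rw [(hΨd x hx.1).deriv]
      nlinarith [mul_pos (hKpos x hx.1.le) (neg_pos.2 (hgneg x hx.1 hx.2))]
  have mono2 : StrictAntiOn Φ (Ici θs) := by
    apply strictAntiOn_of_deriv_neg (convex_Ici θs)
    · exact fun x hx => (hΨd x (hθs0.trans_le hx)).continuousAt.continuousWithinAt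
    · intro x hx
      rw [interior_Ici] at hx
      rw [(hΨd x (hθs0.trans hx)).deriv]
      nlinarith [mul_pos (hKpos x (hθs0.trans hx).le) (hgpos x hx)]
  have hmax : ∀ θ ∈ Ioi (0:ℝ), Φ θ ≤ Φ θs := by
    intro θ hθ
    rcases lt_trichotomy θ θs with h | h | h
    · exact (mono1 ⟨hθ, h.le⟩ ⟨hθs0, le_rfl⟩ h).le
    · rw [h]
    · exact (mono2 self_mem_Ici (mem_Ici.2 h.le) h).le
  have hstrict : ∀ θ ∈ Ioi (0:ℝ), θ ≠ θs → Φ θ < Φ θs := by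
    intro θ hθ hne
    rcases lt_trichotomy θ θs with h | h | h
    · exact mono1 ⟨hθ, h.le⟩ ⟨hθs0, le_rfl⟩ h
    · exact absurd h hne
    · exact mono2 self_mem_Ici (mem_Ici.2 h.le) h
  have huniq : ∀ θ ∈ Ioi (0:ℝ), (∀ θ' ∈ Ioi (0:ℝ), Φ θ' ≤ Φ θ) → θ = θs := by
    intro θ hθ hm
    by_contra hne
    exact absurd (hm θs (mem_Ioi.2 hθs0)) (not_le.2 (hstrict θ hθ hne))
  have heqiff : ∀ θ ∈ Ioi (0:ℝ),
      (g θ = 0 ↔ θ * f p (p-2) θ / f p 0 θ = (1-β)*p/(2*(p-1)*β)) := by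
    intro θ hθ
    have hθ0 : (0:ℝ) < θ := hθ
    have e1 := (hIpos θ hθ0.le).ne'
    have e2 := (hJpos θ hθ0.le).ne'
    have hc' : c * (2*(p-1)) = (1-β)*p := by
      rw [hc]
      field_simp
    rw [hg]
    simp only
    rw [sub_eq_zero, div_eq_div_iff e1 (mul_pos hθ0 (hJpos θ hθ0.le)).ne',
      div_eq_div_iff e1 (by positivity)]
    constructor
    · intro h
      linear_combination 2*(p-1)*h + f p 0 θ * hc'
    · intro h
      have h2 : (2*(p-1)) * (β * (θ * f p (p-2) θ)) = (2*(p-1)) * (c * f p 0 θ) := by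
        linear_combination h - f p 0 θ * hc'
      exact mul_left_cancel₀ (by positivity : (2*(p-1)) ≠ 0) h2
  refine ⟨θs, hθs0, hmax, huniq, ?_⟩
  intro θ hθ
  constructor
  · intro hm
    have hts := huniq θ hθ hm
    subst hts
    exact (heqiff θ hθ).1 hgθs
  · intro he
    have h0 : g θ = 0 := (heqiff θ hθ).2 he
    have hts : θ = θs := hgmono.injOn hθ (mem_Ioi.2 hθs0) (by rw [h0, hgθs])
    rw [hts]
    exact hmax
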